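/- Let τ₀, τ₁ ∈ ℝⁿ have all positive entries and define componentwise γ_i(t) = τ₀ᵢ^{1-t} · τ₁ᵢ^t for t ∈ ℝ. Then γ_i(0) = τ₀ᵢ and γ_i(1) = τ₁ᵢ, γ is twice differentiable and satisfies γ_i''(t) = γ_i'(t)²/γ_i(t) for all t, and the speed is constant: ∑_{i=1}^n (γ_i'(t)/γ_i(t))² = ∑_{i=1}^n (log(τ₁ᵢ/τ₀ᵢ))² for all real t. -/

import Mathlib

open Finset

private lemma exp_aff_hasDerivAt (b c t : ℝ) :
    HasDerivAt (fun t : ℝ => Real.exp (b + c * t)) (c * Real.exp (b + c * t)) t := by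
  have h : HasDerivAt (fun t : ℝ => b + c * t) c t := by
    simpa using ((hasDerivAt_id t).const_mul c).const_add b
  simpa [mul_comm] using h.exp

private lemma exp_aff_deriv (b c : ℝ) :
    deriv (fun t : ℝ => Real.exp (b + c * t)) = fun t => c * Real.exp (b + c * t) := by
  funext t
  exact (exp_aff_hasDerivAt b c t).deriv

/-- Endpoint form of the texture geodesic of Proposition 2: for `τ₀, τ₁ ∈ ℝⁿ` with positive
entries, the componentwise curve `γᵢ(t) = τ₀ᵢ^{1-t} τ₁ᵢ^t` joins `τ₀` to `τ₁`, is twice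
differentiable, satisfies the geodesic equation `γᵢ'' = (γᵢ')²/γᵢ`, and has constant
squared speed `∑ᵢ (γᵢ'(t)/γᵢ(t))² = ∑ᵢ (log(τ₁ᵢ/τ₀ᵢ))²`. -/
theorem texture_geodesic_endpoint_form
    {n : ℕ} (τ₀ τ₁ : Fin n → ℝ) (hτ₀ : ∀ i, 0 < τ₀ i) (hτ₁ : ∀ i, 0 < τ₁ i)
    (γ : Fin n → ℝ → ℝ)
    (hγ : γ = fun i (t : ℝ) => τ₀ i ^ (1 - t) * τ₁ i ^ t) :
    (∀ i : Fin n, γ i 0 = τ₀ i ∧ γ i 1 = τ₁ i) ∧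
    (∀ i : Fin n, ∀ t : ℝ, DifferentiableAt ℝ (γ i) t ∧ DifferentiableAt ℝ (deriv (γ i)) t) ∧
    (∀ i : Fin n, ∀ t : ℝ, deriv (deriv (γ i)) t = (deriv (γ i) t) ^ 2 / γ i t) ∧
    (∀ t : ℝ, ∑ i : Fin n, (deriv (γ i) t / γ i t) ^ 2
        = ∑ i : Fin n, (Real.log (τ₁ i / τ₀ i)) ^ 2) := by
  set b : Fin n → ℝ := fun i => Real.log (τ₀ i) with hb
  set c : Fin n → ℝ := fun i => Real.log (τ₁ i) - Real.log (τ₀ i) with hc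
  have hγ' : ∀ i, γ i = fun t : ℝ => Real.exp (b i + c i * t) := by
    intro i
    funext t
    rw [hγ]
    simp only []
    rw [Real.rpow_def_of_pos (hτ₀ i), Real.rpow_def_of_pos (hτ₁ i),
      ← Real.exp_add]
    ring_nf
    simp only [hb, hc]
    ring_nf
  have hd1 : ∀ i, deriv (γ i) = fun t : ℝ => c i * Real.exp (b i + c i * t) := by
    intro i; rw [hγ' i]; exact exp_aff_deriv _ _
  have hd2 : ∀ i, deriv (deriv (γ i)) = fun t : ℝ => c i * (c i * Real.exp (b i + c i * t)) := by
    intro i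
    rw [hd1 i]
    funext t
    exact (((exp_aff_hasDerivAt (b i) (c i) t).const_mul (c i)).deriv)
  refine ⟨?_, ?_, ?_, ?_⟩
  · intro i
    constructor
    · rw [hγ' i]
      simp [hb, Real.exp_log (hτ₀ i)]
    · rw [hγ' i]
      simp only [hb, hc, mul_one, Real.exp_add, Real.exp_sub,
        Real.exp_log (hτ₀ i), Real.exp_log (hτ₁ i)]
      rw [mul_comm]
      exact div_mul_cancel₀ _ (ne_of_gt (hτ₀ i))
  · intro i t
    constructor
    · rw [hγ' i]
      exact (exp_aff_hasDerivAt _ _ t).differentiableAt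
    · rw [hd1 i]
      exact ((exp_aff_hasDerivAt _ _ t).const_mul (c i)).differentiableAt
  · intro i t
    rw [hd2 i, hd1 i, hγ' i]
    have := Real.exp_pos (b i + c i * t)
    field_simp
  · intro t
    apply Finset.sum_congr rfl
    intro i _
    rw [hd1 i, hγ' i]
    have := Real.exp_ne_zero (b i + c i * t)
    rw [mul_div_assoc, div_self this, mul_one,
      Real.log_div (ne_of_gt (hτ₁ i)) (ne_of_gt (hτ₀ i))]
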